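/- For the bounded Laplace mechanism with sensitivity Δf = u - l, the condition b ≥ (u - l)/ε suffices for ε-local differential privacy: for all r, r' ∈ [l,u] and all x ∈ [l,u], f_W^r(x) ≤ e^ε f_W^{r'}(x). -/

import Mathlib

private lemma aux1 (p q : ℝ) (hp : 0 ≤ p) (hq : 0 ≤ q) :
    (1 - Real.exp (-(p + q))) / 2 ≤ 1 - (1 / 2) * (Real.exp (-p) + Real.exp (-q)) := by
  have ha : Real.exp (-p) ≤ 1 := Real.exp_le_one_iff.2 (by linarith)
  have hb : Real.exp (-q) ≤ 1 := Real.exp_le_one_iff.2 (by linarith)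
  have e : Real.exp (-(p + q)) = Real.exp (-p) * Real.exp (-q) := by
    rw [← Real.exp_add]; ring_nf
  nlinarith [mul_nonneg (sub_nonneg.2 ha) (sub_nonneg.2 hb)]

private lemma aux2 (p q : ℝ) (hp : 0 ≤ p) (hq : 0 ≤ q) :
    (1 - (1 / 2) * (Real.exp (-p) + Real.exp (-q))) * Real.exp p
      ≤ (Real.exp (p + q) - 1) / 2 := by
  have hA0 : 0 < Real.exp p := Real.exp_pos p
  have hB0 : 0 < Real.exp q := Real.exp_pos q
  have e1 : Real.exp (-p) * Real.exp p = 1 := by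
    rw [← Real.exp_add]; simp
  have e2 : Real.exp (-q) * Real.exp q = 1 := by
    rw [← Real.exp_add]; simp
  have e3 : Real.exp (p + q) = Real.exp p * Real.exp q := Real.exp_add p q
  nlinarith [mul_nonneg hA0.le (sq_nonneg (Real.exp q - 1)), e1, e2, e3,
    mul_pos hA0 hB0, mul_le_mul_of_nonneg_left e2.le hA0.le]

theorem blp_ldp_full_sensitivity (l u b ε : ℝ) (hlu : l < u) (hε : 0 < ε)
    (hb : b ≥ (u - l) / ε)
    (C : ℝ → ℝ)
    (hC : ∀ r, C r = 1 - (1 / 2) * (Real.exp (-(r - l) / b) + Real.exp (-(u - r) / b)))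
    (f : ℝ → ℝ → ℝ)
    (hf : ∀ r x, f r x = (1 / (2 * b * C r)) * Real.exp (-|x - r| / b)) :
    ∀ r ∈ Set.Icc l u, ∀ r' ∈ Set.Icc l u, ∀ x ∈ Set.Icc l u,
      f r x ≤ Real.exp ε * f r' x := by
  have hb0 : 0 < b := lt_of_lt_of_le (div_pos (by linarith) hε) hb
  intro r hr r' hr' x hx
  obtain ⟨hrl, hru⟩ := hr
  obtain ⟨hr'l, hr'u⟩ := hr'
  obtain ⟨hxl, hxu⟩ := hx
  set D : ℝ := (u - l) / b with hD
  have hD0 : 0 < D := div_pos (by linarith) hb0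
  have hDε : D ≤ ε := by
    have h1 : u - l ≤ b * ε := (div_le_iff₀ hε).1 hb
    rw [hD, div_le_iff₀ hb0]
    linarith [mul_comm b ε]
  have hCform : ∀ s, C s = 1 - (1 / 2) * (Real.exp (-((s - l) / b)) + Real.exp (-((u - s) / b))) := by
    intro s; rw [hC s, neg_div, neg_div]
  have hsum : ∀ s : ℝ, (s - l) / b + (u - s) / b = D := by
    intro s; rw [hD]; field_simp; ring
  have aux1' : ∀ p q : ℝ, 0 ≤ p → 0 ≤ q → p + q = D →
      (1 - Real.exp (-D)) / 2 ≤ 1 - (1 / 2) * (Real.exp (-p) + Real.exp (-q)) := by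
    intro p q hp hq hpq
    have := aux1 p q hp hq
    rwa [hpq] at this
  have aux2' : ∀ p q : ℝ, 0 ≤ p → 0 ≤ q → p + q = D →
      (1 - (1 / 2) * (Real.exp (-p) + Real.exp (-q))) * Real.exp p ≤ (Real.exp D - 1) / 2 := by
    intro p q hp hq hpq
    have := aux2 p q hp hq
    rwa [hpq] at this
  have hpr : (0:ℝ) ≤ (r - l) / b := div_nonneg (by linarith) hb0.le
  have hqr : (0:ℝ) ≤ (u - r) / b := div_nonneg (by linarith) hb0.le
  have hpr' : (0:ℝ) ≤ (r' - l) / b := div_nonneg (by linarith) hb0.le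
  have hqr' : (0:ℝ) ≤ (u - r') / b := div_nonneg (by linarith) hb0.le
  have hCr_lb : (1 - Real.exp (-D)) / 2 ≤ C r := by
    rw [hCform r]; exact aux1' _ _ hpr hqr (hsum r)
  have hCr'_lb : (1 - Real.exp (-D)) / 2 ≤ C r' := by
    rw [hCform r']; exact aux1' _ _ hpr' hqr' (hsum r')
  have hexpD : Real.exp (-D) < 1 := by
    rw [Real.exp_lt_one_iff]; linarith
  have hCr0 : 0 < C r := lt_of_lt_of_le (by linarith) hCr_lb
  have hCr'0 : 0 < C r' := lt_of_lt_of_le (by linarith) hCr'_lb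
  -- upper bound : C r' * exp(|x - r'|/b) ≤ (exp D - 1)/2
  have hkeyB : C r' * Real.exp (|x - r'| / b) ≤ (Real.exp D - 1) / 2 := by
    have habs : |x - r'| ≤ max (r' - l) (u - r') := by
      rcases abs_cases (x - r') with ⟨h1, _⟩ | ⟨h1, _⟩
      · rw [h1]; exact le_max_of_le_right (by linarith)
      · rw [h1]; exact le_max_of_le_left (by linarith)
    rcases max_cases (r' - l) (u - r') with ⟨hm, _⟩ | ⟨hm, _⟩
    · rw [hm] at habs
      have hmono : Real.exp (|x - r'| / b) ≤ Real.exp ((r' - l) / b) :=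
        Real.exp_le_exp.2 (by gcongr)
      calc C r' * Real.exp (|x - r'| / b) ≤ C r' * Real.exp ((r' - l) / b) :=
            mul_le_mul_of_nonneg_left hmono hCr'0.le
        _ ≤ (Real.exp D - 1) / 2 := by
            rw [hCform r']; exact aux2' _ _ hpr' hqr' (hsum r')
    · rw [hm] at habs
      have hmono : Real.exp (|x - r'| / b) ≤ Real.exp ((u - r') / b) :=
        Real.exp_le_exp.2 (by gcongr)
      calc C r' * Real.exp (|x - r'| / b) ≤ C r' * Real.exp ((u - r') / b) :=
            mul_le_mul_of_nonneg_left hmono hCr'0.le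
        _ ≤ (Real.exp D - 1) / 2 := by
            rw [hCform r', add_comm (Real.exp (-((r' - l) / b)))]
            exact aux2' _ _ hqr' hpr' (by rw [← hsum r']; ring)
  -- main key inequality
  have key : C r' * Real.exp (-|x - r| / b) ≤ Real.exp ε * (C r * Real.exp (-|x - r'| / b)) := by
    have h1 : Real.exp (-|x - r| / b) ≤ 1 := by
      rw [Real.exp_le_one_iff]
      exact div_nonpos_of_nonpos_of_nonneg (neg_nonpos.2 (abs_nonneg _)) hb0.le
    have h2 : C r' = C r' * Real.exp (|x - r'| / b) * Real.exp (-|x - r'| / b) := by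
      rw [mul_assoc, ← Real.exp_add]
      have : |x - r'| / b + -|x - r'| / b = 0 := by ring
      rw [this, Real.exp_zero, mul_one]
    have hexp' : 0 < Real.exp (-|x - r'| / b) := Real.exp_pos _
    have h3 : C r' * Real.exp (-|x - r| / b) ≤ C r' :=
      mul_le_of_le_one_right hCr'0.le h1
    have h4 : C r' ≤ (Real.exp D - 1) / 2 * Real.exp (-|x - r'| / b) := by
      rw [h2]; exact mul_le_mul_of_nonneg_right hkeyB hexp'.le
    have h5 : (Real.exp D - 1) / 2 ≤ Real.exp ε * C r := by
      have hεD : Real.exp D ≤ Real.exp ε := Real.exp_le_exp.2 hDε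
      have hprod : Real.exp D * Real.exp (-D) = 1 := by
        rw [← Real.exp_add]; simp
      have heq : Real.exp D * ((1 - Real.exp (-D)) / 2) = (Real.exp D - 1) / 2 := by
        field_simp; nlinarith [hprod]
      calc (Real.exp D - 1) / 2 = Real.exp D * ((1 - Real.exp (-D)) / 2) := heq.symm
        _ ≤ Real.exp ε * C r :=
            mul_le_mul hεD hCr_lb (by linarith) (Real.exp_pos ε).le
    calc C r' * Real.exp (-|x - r| / b) ≤ C r' := h3
      _ ≤ (Real.exp D - 1) / 2 * Real.exp (-|x - r'| / b) := h4
      _ ≤ Real.exp ε * C r * Real.exp (-|x - r'| / b) :=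
          mul_le_mul_of_nonneg_right h5 hexp'.le
      _ = Real.exp ε * (C r * Real.exp (-|x - r'| / b)) := by ring
  rw [hf r x, hf r' x]
  have d1 : 0 < 2 * b * C r := by positivity
  have d2 : 0 < 2 * b * C r' := by positivity
  rw [show (1 / (2 * b * C r)) * Real.exp (-|x - r| / b)
      = Real.exp (-|x - r| / b) / (2 * b * C r) from by ring,
    show Real.exp ε * ((1 / (2 * b * C r')) * Real.exp (-|x - r'| / b))
      = (Real.exp ε * Real.exp (-|x - r'| / b)) / (2 * b * C r') from by ring,
    div_le_div_iff₀ d1 d2]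
  nlinarith [mul_le_mul_of_nonneg_left key (by linarith : (0:ℝ) ≤ 2 * b)]
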